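/- arXiv:2402.08487 — 2 statements merged into one kernel-verified Lean document; each statement's English description precedes it below -/
import Mathlib

section
/- With Φ₁ = ā/(a·ā + b·b̄) and Φ₂ = -b/(a·ā + b·b̄) the constituents of p⁻¹, the full quaternionic derivative (∂ₐΦ₁ + ∂_āΦ₁) + (∂ₐΦ₂ + ∂_āΦ₂)·j equals -conj(p)²/|p|⁴ = -p⁻² for p ≠ 0, where a, ā, b, b̄ are evaluated at the actual components of p. -/
open Quaternion

noncomputable section
set_option maxHeartbeats 2000000

/-- Embedding of a complex number `x + y i` into the real quaternions. -/
def Cq (z : ℂ) : ℍ[ℝ] := ⟨z.re, z.im, 0, 0⟩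

/-- The quaternion unit `i`. -/
def qi : ℍ[ℝ] := ⟨0, 1, 0, 0⟩

/-- The quaternion unit `j`. -/
def qj : ℍ[ℝ] := ⟨0, 0, 1, 0⟩

/-- The quaternion unit `k`. -/
def qk : ℍ[ℝ] := ⟨0, 0, 0, 1⟩
/-- The full quaternionic derivative of `p⁻¹`:
`(∂ₐΦ₁ + ∂_āΦ₁) + (∂ₐΦ₂ + ∂_āΦ₂)·j = -conj(p)²/|p|⁴ = -p⁻²`, where
`Φ₁ = ā/(a·ā + b·b̄)`, `Φ₂ = -b/(a·ā + b·b̄)` and the formal partial derivatives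
in the four independent variables are evaluated at `(a, conj a, b, conj b)`. -/
theorem full_derivative_p_inv (a b : ℂ) (p : ℍ[ℝ]) (hab : p = Cq a + Cq b * qj)
    (hp : p ≠ 0) :
    Cq (deriv (fun t : ℂ => (starRingEnd ℂ) a / (t * (starRingEnd ℂ) a + b * (starRingEnd ℂ) b)) a
          + deriv (fun t : ℂ => t / (a * t + b * (starRingEnd ℂ) b)) ((starRingEnd ℂ) a))
      + Cq (deriv (fun t : ℂ => -b / (t * (starRingEnd ℂ) a + b * (starRingEnd ℂ) b)) a
          + deriv (fun t : ℂ => -b / (a * t + b * (starRingEnd ℂ) b)) ((starRingEnd ℂ) a)) * qj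
      = -(star p) ^ 2 / ((Quaternion.normSq p : ℝ) : ℍ[ℝ]) ^ 2 ∧
    -(star p) ^ 2 / ((Quaternion.normSq p : ℝ) : ℍ[ℝ]) ^ 2 = -(p⁻¹) ^ 2 := by
  have hab0 : a ≠ 0 ∨ b ≠ 0 := by
    by_contra h
    push_neg at h
    apply hp
    rw [hab, h.1, h.2]
    ext <;> simp only [Quaternion.re_add, Quaternion.imI_add, Quaternion.imJ_add, Quaternion.imK_add, Quaternion.re_mul, Quaternion.imI_mul, Quaternion.imJ_mul, Quaternion.imK_mul, Quaternion.re_neg, Quaternion.imI_neg, Quaternion.imJ_neg, Quaternion.imK_neg, Quaternion.re_smul, Quaternion.imI_smul, Quaternion.imJ_smul, Quaternion.imK_smul, Quaternion.re_star, Quaternion.imI_star, Quaternion.imJ_star, Quaternion.imK_star] <;> simp [Cq, qj]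
  set D : ℂ := a * (starRingEnd ℂ) a + b * (starRingEnd ℂ) b with hDdef
  have hD : D = ((Complex.normSq a + Complex.normSq b : ℝ) : ℂ) := by
    rw [hDdef, Complex.mul_conj, Complex.mul_conj]; push_cast; ring
  have hnpos : (0:ℝ) < Complex.normSq a + Complex.normSq b := by
    rcases hab0 with h | h
    · have := Complex.normSq_pos.2 h
      have := Complex.normSq_nonneg b; linarith
    · have := Complex.normSq_pos.2 h
      have := Complex.normSq_nonneg a; linarith
  have hDne : D ≠ 0 := by
    rw [hD]; exact_mod_cast hnpos.ne'
  have hden1 : HasDerivAt (fun t : ℂ => t * (starRingEnd ℂ) a + b * (starRingEnd ℂ) b)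
      ((starRingEnd ℂ) a) a := by
    simpa using ((hasDerivAt_id a).mul_const ((starRingEnd ℂ) a)).add_const
      (b * (starRingEnd ℂ) b)
  have hden2 : HasDerivAt (fun t : ℂ => a * t + b * (starRingEnd ℂ) b) a ((starRingEnd ℂ) a) := by
    simpa using ((hasDerivAt_id ((starRingEnd ℂ) a)).const_mul a).add_const
      (b * (starRingEnd ℂ) b)
  have h1 : deriv (fun t : ℂ => (starRingEnd ℂ) a / (t * (starRingEnd ℂ) a + b * (starRingEnd ℂ) b)) a
      = (0 * D - (starRingEnd ℂ) a * (starRingEnd ℂ) a) / D ^ 2 :=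
    ((hasDerivAt_const a ((starRingEnd ℂ) a)).div hden1 hDne).deriv
  have h2 : deriv (fun t : ℂ => t / (a * t + b * (starRingEnd ℂ) b)) ((starRingEnd ℂ) a)
      = (1 * D - (starRingEnd ℂ) a * a) / D ^ 2 := by
    have := ((hasDerivAt_id' ((starRingEnd ℂ) a)).div hden2 (hDne)).deriv
    simpa [hDdef, Pi.div_def] using this
  have h3 : deriv (fun t : ℂ => -b / (t * (starRingEnd ℂ) a + b * (starRingEnd ℂ) b)) a
      = (0 * D - (-b) * (starRingEnd ℂ) a) / D ^ 2 :=
    ((hasDerivAt_const a (-b)).div hden1 hDne).deriv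
  have h4 : deriv (fun t : ℂ => -b / (a * t + b * (starRingEnd ℂ) b)) ((starRingEnd ℂ) a)
      = (0 * D - (-b) * a) / D ^ 2 :=
    ((hasDerivAt_const ((starRingEnd ℂ) a) (-b)).div hden2 hDne).deriv
  have hns : (Quaternion.normSq p : ℝ) = Complex.normSq a + Complex.normSq b := by
    rw [hab, Quaternion.normSq_def']
    simp only [Quaternion.re_add, Quaternion.imI_add, Quaternion.imJ_add, Quaternion.imK_add, Quaternion.re_mul, Quaternion.imI_mul, Quaternion.imJ_mul, Quaternion.imK_mul, Quaternion.re_neg, Quaternion.imI_neg, Quaternion.imJ_neg, Quaternion.imK_neg, Quaternion.re_smul, Quaternion.imI_smul, Quaternion.imJ_smul, Quaternion.imK_smul, Quaternion.re_star, Quaternion.imI_star, Quaternion.imJ_star, Quaternion.imK_star]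
    simp [Cq, qj, Complex.normSq_apply]
    ring
  set n : ℝ := Complex.normSq a + Complex.normSq b with hn
  have hrhs : -(star p) ^ 2 / ((Quaternion.normSq p : ℝ) : ℍ[ℝ]) ^ 2
      = ((n ^ 2)⁻¹ : ℝ) • (-(star p) ^ 2) := by
    rw [div_eq_mul_inv, ← Quaternion.coe_pow, ← Quaternion.coe_inv, Quaternion.mul_coe_eq_smul, hns]
  have e1 : (0 * D - (starRingEnd ℂ) a * (starRingEnd ℂ) a) / D ^ 2
      + (1 * D - (starRingEnd ℂ) a * a) / D ^ 2
      = (b * (starRingEnd ℂ) b - ((starRingEnd ℂ) a) ^ 2) / D ^ 2 := by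
    rw [← add_div]; congr 1; rw [hDdef]; ring
  have e2 : (0 * D - (-b) * (starRingEnd ℂ) a) / D ^ 2 + (0 * D - (-b) * a) / D ^ 2
      = ((a + (starRingEnd ℂ) a) * b) / D ^ 2 := by
    rw [← add_div]; congr 1; ring
  constructor
  · rw [h1, h2, h3, h4, e1, e2, hrhs, hab]
    rw [Quaternion.ext_iff]
    simp only [pow_two, Quaternion.re_add, Quaternion.imI_add, Quaternion.imJ_add, Quaternion.imK_add, Quaternion.re_mul, Quaternion.imI_mul, Quaternion.imJ_mul, Quaternion.imK_mul, Quaternion.re_neg, Quaternion.imI_neg, Quaternion.imJ_neg, Quaternion.imK_neg, Quaternion.re_smul, Quaternion.imI_smul, Quaternion.imJ_smul, Quaternion.imK_smul, Quaternion.re_star, Quaternion.imI_star, Quaternion.imJ_star, Quaternion.imK_star]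
    simp only [Cq, qj, hD, Quaternion.re_add, Quaternion.imI_add, Quaternion.imJ_add,
      Quaternion.imK_add, Quaternion.re_mul, Quaternion.imI_mul, Quaternion.imJ_mul,
      Quaternion.imK_mul, Quaternion.re_neg, Quaternion.imI_neg, Quaternion.imJ_neg,
      Quaternion.imK_neg, Quaternion.re_smul, Quaternion.imI_smul, Quaternion.imJ_smul,
      Quaternion.imK_smul, Quaternion.re_star, Quaternion.imI_star, Quaternion.imJ_star,
      Quaternion.imK_star, pow_two, smul_eq_mul, Complex.add_re, Complex.add_im,
      Complex.sub_re, Complex.sub_im, Complex.mul_re, Complex.mul_im, Complex.conj_re,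
      Complex.conj_im, Complex.div_re, Complex.div_im, Complex.normSq_apply,
      Complex.ofReal_re, Complex.ofReal_im]
    have hne : n ≠ 0 := hnpos.ne'
    refine ⟨?_, ?_, ?_, ?_⟩ <;> field_simp <;> ring
  · rw [hrhs, Quaternion.inv_def, smul_pow, hns, inv_pow, smul_neg]
end
end

section
/- The second full quaternionic derivative of p⁻¹ equals 2p⁻³: with Φ₁⁽¹⁾ = (b·b̄ - ā²)/(a·ā + b·b̄)² and Φ₂⁽¹⁾ = b·(a + ā)/(a·ā + b·b̄)², one has (∂ₐΦ₁⁽¹⁾ + ∂_āΦ₁⁽¹⁾) + (∂ₐΦ₂⁽¹⁾ + ∂_āΦ₂⁽¹⁾)·j = 2·conj(p)³/|p|⁶ = 2p⁻³ for p ≠ 0. -/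
open Quaternion

noncomputable section

lemma cq_mul (x y u v : ℂ) : (Cq x + Cq y * qj) * (Cq u + Cq v * qj)
    = Cq (x*u - y * (starRingEnd ℂ) v) + Cq (x*v + y * (starRingEnd ℂ) u) * qj := by
  ext <;> simp only [Quaternion.re_add, Quaternion.imI_add, Quaternion.imJ_add, Quaternion.imK_add, Quaternion.re_mul, Quaternion.imI_mul, Quaternion.imJ_mul, Quaternion.imK_mul, Quaternion.re_smul, Quaternion.imI_smul, Quaternion.imJ_smul, Quaternion.imK_smul, Quaternion.re_star, Quaternion.imI_star, Quaternion.imJ_star, Quaternion.imK_star, Quaternion.re_coe, Quaternion.imI_coe, Quaternion.imJ_coe, Quaternion.imK_coe] <;> simp [Cq, qj, Complex.mul_re, Complex.mul_im] <;> ring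

lemma cq_smul (r : ℝ) (x y : ℂ) : r • (Cq x + Cq y * qj) = Cq (r * x) + Cq (r * y) * qj := by
  ext <;> simp only [Quaternion.re_add, Quaternion.imI_add, Quaternion.imJ_add, Quaternion.imK_add, Quaternion.re_mul, Quaternion.imI_mul, Quaternion.imJ_mul, Quaternion.imK_mul, Quaternion.re_smul, Quaternion.imI_smul, Quaternion.imJ_smul, Quaternion.imK_smul, Quaternion.re_star, Quaternion.imI_star, Quaternion.imJ_star, Quaternion.imK_star, Quaternion.re_coe, Quaternion.imI_coe, Quaternion.imJ_coe, Quaternion.imK_coe] <;> simp [Cq, qj]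

lemma cq_congr {x y u v : ℂ} (h1 : x = u) (h2 : y = v) :
    Cq x + Cq y * qj = Cq u + Cq v * qj := by rw [h1, h2]

/-- The second full quaternionic derivative of `p⁻¹` equals `2p⁻³`: with
`Φ₁⁽¹⁾ = (b·b̄ - ā²)/(a·ā + b·b̄)²` and `Φ₂⁽¹⁾ = b·(a + ā)/(a·ā + b·b̄)²`,
one has `(∂ₐΦ₁⁽¹⁾ + ∂_āΦ₁⁽¹⁾) + (∂ₐΦ₂⁽¹⁾ + ∂_āΦ₂⁽¹⁾)·j = 2·conj(p)³/|p|⁶ = 2p⁻³`. -/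
theorem second_full_derivative_p_inv (a b : ℂ) (p : ℍ[ℝ]) (hab : p = Cq a + Cq b * qj)
    (hp : p ≠ 0) :
    Cq (deriv (fun t : ℂ =>
            (b * (starRingEnd ℂ) b - ((starRingEnd ℂ) a) ^ 2)
              / (t * (starRingEnd ℂ) a + b * (starRingEnd ℂ) b) ^ 2) a
          + deriv (fun t : ℂ =>
            (b * (starRingEnd ℂ) b - t ^ 2) / (a * t + b * (starRingEnd ℂ) b) ^ 2)
            ((starRingEnd ℂ) a))
      + Cq (deriv (fun t : ℂ =>
            b * (t + (starRingEnd ℂ) a) / (t * (starRingEnd ℂ) a + b * (starRingEnd ℂ) b) ^ 2) a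
          + deriv (fun t : ℂ =>
            b * (a + t) / (a * t + b * (starRingEnd ℂ) b) ^ 2) ((starRingEnd ℂ) a)) * qj
      = 2 * (star p) ^ 3 / ((Quaternion.normSq p : ℝ) : ℍ[ℝ]) ^ 3 ∧
    2 * (star p) ^ 3 / ((Quaternion.normSq p : ℝ) : ℍ[ℝ]) ^ 3 = 2 * (p⁻¹) ^ 3 := by
  set ca := (starRingEnd ℂ) a with hca
  set cb := (starRingEnd ℂ) b with hcb
  set r : ℝ := Complex.normSq a + Complex.normSq b with hr
  have hDr : ((r : ℝ) : ℂ) = a * ca + b * cb := by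
    rw [hr, hca, hcb, Complex.mul_conj, Complex.mul_conj]; push_cast; ring
  have hne : ¬ (a = 0 ∧ b = 0) := by
    rintro ⟨rfl, rfl⟩
    exact hp (by rw [hab]; ext <;> simp only [Quaternion.re_add, Quaternion.imI_add, Quaternion.imJ_add, Quaternion.imK_add, Quaternion.re_mul, Quaternion.imI_mul, Quaternion.imJ_mul, Quaternion.imK_mul, Quaternion.re_smul, Quaternion.imI_smul, Quaternion.imJ_smul, Quaternion.imK_smul, Quaternion.re_star, Quaternion.imI_star, Quaternion.imJ_star, Quaternion.imK_star, Quaternion.re_coe, Quaternion.imI_coe, Quaternion.imJ_coe, Quaternion.imK_coe] <;> simp [Cq, qj])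
  have hr0 : r ≠ 0 := by
    intro h
    rcases (add_eq_zero_iff_of_nonneg (Complex.normSq_nonneg a)
      (Complex.normSq_nonneg b)).1 h with ⟨h1, h2⟩
    exact hne ⟨Complex.normSq_eq_zero.1 h1, Complex.normSq_eq_zero.1 h2⟩
  have hD : a * ca + b * cb ≠ 0 := by
    rw [← hDr]; exact_mod_cast Complex.ofReal_ne_zero.2 hr0
  have hnp : Quaternion.normSq p = r := by
    rw [hab, Quaternion.normSq_def', hr]
    simp only [Quaternion.re_add, Quaternion.imI_add, Quaternion.imJ_add, Quaternion.imK_add, Quaternion.re_mul, Quaternion.imI_mul, Quaternion.imJ_mul, Quaternion.imK_mul, Quaternion.re_smul, Quaternion.imI_smul, Quaternion.imJ_smul, Quaternion.imK_smul, Quaternion.re_star, Quaternion.imI_star, Quaternion.imJ_star, Quaternion.imK_star, Quaternion.re_coe, Quaternion.imI_coe, Quaternion.imJ_coe, Quaternion.imK_coe]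
    simp [Cq, qj, Complex.normSq_apply]
    ring
  have hsp : star p = Cq ca + Cq (-b) * qj := by
    rw [hab]; ext <;> simp only [Quaternion.re_add, Quaternion.imI_add, Quaternion.imJ_add, Quaternion.imK_add, Quaternion.re_mul, Quaternion.imI_mul, Quaternion.imJ_mul, Quaternion.imK_mul, Quaternion.re_smul, Quaternion.imI_smul, Quaternion.imJ_smul, Quaternion.imK_smul, Quaternion.re_star, Quaternion.imI_star, Quaternion.imJ_star, Quaternion.imK_star, Quaternion.re_coe, Quaternion.imI_coe, Quaternion.imJ_coe, Quaternion.imK_coe] <;> simp [Cq, qj, hca]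
  -- the four derivatives
  have d1 : deriv (fun t : ℂ => (b * cb - ca ^ 2) / (t * ca + b * cb) ^ 2) a
      = (0 * (a * ca + b * cb) ^ 2
          - (b * cb - ca ^ 2) * (2 * (a * ca + b * cb) ^ 1 * (1 * ca)))
        / ((a * ca + b * cb) ^ 2) ^ 2 :=
    ((hasDerivAt_const a _).div ((((hasDerivAt_id a).mul_const _).add_const _).pow 2)
      (pow_ne_zero 2 hD)).deriv
  have d2 : deriv (fun t : ℂ => (b * cb - t ^ 2) / (a * t + b * cb) ^ 2) ca
      = (-(2 * ca ^ 1) * (a * ca + b * cb) ^ 2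
          - (b * cb - ca ^ 2) * (2 * (a * ca + b * cb) ^ 1 * (a * 1)))
        / ((a * ca + b * cb) ^ 2) ^ 2 := by
    have hnum : HasDerivAt (fun t : ℂ => b * cb - t ^ 2) (-(2 * ca ^ 1)) ca := by
      have h := (hasDerivAt_const ca (b * cb)).sub (hasDerivAt_pow 2 ca)
      simp only [zero_sub, Nat.cast_ofNat, Nat.add_one_sub_one] at h
      exact h
    exact (hnum.div ((((hasDerivAt_id ca).const_mul a).add_const _).pow 2)
      (pow_ne_zero 2 hD)).deriv
  have d3 : deriv (fun t : ℂ => b * (t + ca) / (t * ca + b * cb) ^ 2) a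
      = (b * 1 * (a * ca + b * cb) ^ 2
          - b * (a + ca) * (2 * (a * ca + b * cb) ^ 1 * (1 * ca)))
        / ((a * ca + b * cb) ^ 2) ^ 2 := by
    have hnum : HasDerivAt (fun t : ℂ => b * (t + ca)) (b * 1) a :=
      ((hasDerivAt_id a).add_const ca).const_mul b
    exact (hnum.div ((((hasDerivAt_id a).mul_const _).add_const _).pow 2)
      (pow_ne_zero 2 hD)).deriv
  have d4 : deriv (fun t : ℂ => b * (a + t) / (a * t + b * cb) ^ 2) ca
      = (b * (0 + 1) * (a * ca + b * cb) ^ 2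
          - b * (a + ca) * (2 * (a * ca + b * cb) ^ 1 * (a * 1)))
        / ((a * ca + b * cb) ^ 2) ^ 2 := by
    have hnum : HasDerivAt (fun t : ℂ => b * (a + t)) (b * (0 + 1)) ca :=
      ((hasDerivAt_const ca a).add (hasDerivAt_id ca)).const_mul b
    exact (hnum.div ((((hasDerivAt_id ca).const_mul a).add_const _).pow 2)
      (pow_ne_zero 2 hD)).deriv
  -- canonical form of the RHS
  have h2q : (2 : ℍ[ℝ]) = Cq 2 + Cq 0 * qj := by
    have h2c : ((2 : ℝ) : ℍ[ℝ]) = (2 : ℍ[ℝ]) := by norm_cast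
    rw [← h2c]; ext <;> simp only [Quaternion.re_add, Quaternion.imI_add, Quaternion.imJ_add, Quaternion.imK_add, Quaternion.re_mul, Quaternion.imI_mul, Quaternion.imJ_mul, Quaternion.imK_mul, Quaternion.re_smul, Quaternion.imI_smul, Quaternion.imJ_smul, Quaternion.imK_smul, Quaternion.re_star, Quaternion.imI_star, Quaternion.imJ_star, Quaternion.imK_star, Quaternion.re_coe, Quaternion.imI_coe, Quaternion.imJ_coe, Quaternion.imK_coe] <;> simp [Cq, qj]
  have hcube : (Cq ca + Cq (-b) * qj) ^ 3
      = (Cq ca + Cq (-b) * qj) * (Cq ca + Cq (-b) * qj) * (Cq ca + Cq (-b) * qj) := by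
    rw [pow_succ, pow_two]
  have hRHS : 2 * (star p) ^ 3 / ((Quaternion.normSq p : ℝ) : ℍ[ℝ]) ^ 3
      = Cq (((r ^ 3)⁻¹ : ℝ) * (2 * ((ca * ca - (-b) * (starRingEnd ℂ) (-b)) * ca
            - ((ca * (-b)) + (-b) * (starRingEnd ℂ) ca) * (starRingEnd ℂ) (-b)) - 0))
        + Cq (((r ^ 3)⁻¹ : ℝ) * (2 * ((ca * ca - (-b) * (starRingEnd ℂ) (-b)) * (-b)
            + ((ca * (-b)) + (-b) * (starRingEnd ℂ) ca) * (starRingEnd ℂ) ca) + 0)) * qj := by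
    rw [hsp, hnp, hcube, cq_mul, cq_mul, div_eq_mul_inv, ← Quaternion.coe_pow,
      ← Quaternion.coe_inv, Quaternion.mul_coe_eq_smul, h2q, cq_mul, cq_smul]
    norm_num
  have hr3 : ((((r:ℝ)^3)⁻¹ : ℝ) : ℂ) = ((a * ca + b * cb) ^ 3)⁻¹ := by
    rw [← hDr]; push_cast; ring
  constructor
  · rw [hRHS, d1, d2, d3, d4]
    refine cq_congr ?_ ?_ <;>
      · rw [hr3]
        simp only [hca, hcb, Complex.conj_conj, map_neg]
        field_simp
        ring
  · rw [Quaternion.inv_def, smul_pow, mul_smul_comm, div_eq_mul_inv,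
      ← Quaternion.coe_pow, ← Quaternion.coe_inv, Quaternion.mul_coe_eq_smul, inv_pow]
end
end
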